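/- For every even unimodular ℤ-lattice B, the automorphism group Aut(B(2) ⊕ II_{1,1}) is isomorphic as a group to Aut(B ⊕ I_{1,1}). -/

import Mathlib

open Matrix

/-- Gram matrix of the odd unimodular lattice `I_{p,m}`:
diagonal with `p` entries `+1` and `m` entries `-1`. -/
def gramI (p m : ℕ) : Matrix (Fin (p + m)) (Fin (p + m)) ℤ :=
  Matrix.diagonal fun i => if (i : ℕ) < p then 1 else -1

/-- Gram matrix of the even unimodular lattice `II_{1,1}`. -/
def gramII : Matrix (Fin 2) (Fin 2) ℤ := !![0, 1; 1, 0]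

/-- Gram matrix of the direct sum of two lattices. -/
def gramSum {n m : ℕ} (G : Matrix (Fin n) (Fin n) ℤ) (H : Matrix (Fin m) (Fin m) ℤ) :
    Matrix (Fin (n + m)) (Fin (n + m)) ℤ :=
  Matrix.reindex finSumFinEquiv finSumFinEquiv (Matrix.fromBlocks G 0 0 H)

/-- A lattice (given by its Gram matrix) is even when every vector has even norm. -/
def EvenGram {n : ℕ} (G : Matrix (Fin n) (Fin n) ℤ) : Prop :=
  ∀ v : Fin n → ℤ, Even (v ⬝ᵥ G.mulVec v)

/-- A lattice (given by its Gram matrix) has signature `(p, m)` when its real extension is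
equivalent to the diagonal form with `p` entries `+1` and `m` entries `-1`. -/
def HasSignature {n : ℕ} (G : Matrix (Fin n) (Fin n) ℤ) (p m : ℕ) : Prop :=
  n = p + m ∧ ∃ P : Matrix (Fin n) (Fin n) ℝ, IsUnit P.det ∧
    Pᵀ * (G.map (Int.cast : ℤ → ℝ)) * P =
      Matrix.diagonal fun i : Fin n => if (i : ℕ) < p then 1 else -1
/-- The automorphism group of the lattice with Gram matrix `G`: invertible integer matrices
preserving the bilinear form. -/
def gramAut {n : ℕ} (G : Matrix (Fin n) (Fin n) ℤ) : Subgroup (Matrix (Fin n) (Fin n) ℤ)ˣ where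
  carrier := {P | (P : Matrix (Fin n) (Fin n) ℤ)ᵀ * G * (P : Matrix (Fin n) (Fin n) ℤ) = G}
  one_mem' := by simp
  mul_mem' := by
    intro P Q hP hQ
    have hP' : (P : Matrix (Fin n) (Fin n) ℤ)ᵀ * G * (P : Matrix (Fin n) (Fin n) ℤ) = G := hP
    have hQ' : (Q : Matrix (Fin n) (Fin n) ℤ)ᵀ * G * (Q : Matrix (Fin n) (Fin n) ℤ) = G := hQ
    show ((P * Q : (Matrix (Fin n) (Fin n) ℤ)ˣ) : Matrix (Fin n) (Fin n) ℤ)ᵀ * G *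
        ((P * Q : (Matrix (Fin n) (Fin n) ℤ)ˣ) : Matrix (Fin n) (Fin n) ℤ) = G
    have hc : ((P * Q : (Matrix (Fin n) (Fin n) ℤ)ˣ) : Matrix (Fin n) (Fin n) ℤ) =
        (P : Matrix (Fin n) (Fin n) ℤ) * (Q : Matrix (Fin n) (Fin n) ℤ) := rfl
    rw [hc, Matrix.transpose_mul]
    calc (Q : Matrix (Fin n) (Fin n) ℤ)ᵀ * (P : Matrix (Fin n) (Fin n) ℤ)ᵀ * G *
          ((P : Matrix (Fin n) (Fin n) ℤ) * (Q : Matrix (Fin n) (Fin n) ℤ))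
        = (Q : Matrix (Fin n) (Fin n) ℤ)ᵀ *
            ((P : Matrix (Fin n) (Fin n) ℤ)ᵀ * G * (P : Matrix (Fin n) (Fin n) ℤ)) *
            (Q : Matrix (Fin n) (Fin n) ℤ) := by simp only [Matrix.mul_assoc]
      _ = G := by rw [hP', hQ']
  inv_mem' := by
    intro P hP
    have hP' : (P : Matrix (Fin n) (Fin n) ℤ)ᵀ * G * (P : Matrix (Fin n) (Fin n) ℤ) = G := hP
    show ((P⁻¹ : (Matrix (Fin n) (Fin n) ℤ)ˣ) : Matrix (Fin n) (Fin n) ℤ)ᵀ * G *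
        ((P⁻¹ : (Matrix (Fin n) (Fin n) ℤ)ˣ) : Matrix (Fin n) (Fin n) ℤ) = G
    calc ((P⁻¹ : (Matrix (Fin n) (Fin n) ℤ)ˣ) : Matrix (Fin n) (Fin n) ℤ)ᵀ * G *
          ((P⁻¹ : (Matrix (Fin n) (Fin n) ℤ)ˣ) : Matrix (Fin n) (Fin n) ℤ)
        = ((P⁻¹ : (Matrix (Fin n) (Fin n) ℤ)ˣ) : Matrix (Fin n) (Fin n) ℤ)ᵀ *
            ((P : Matrix (Fin n) (Fin n) ℤ)ᵀ * G * (P : Matrix (Fin n) (Fin n) ℤ)) *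
            ((P⁻¹ : (Matrix (Fin n) (Fin n) ℤ)ˣ) : Matrix (Fin n) (Fin n) ℤ) := by rw [hP']
      _ = ((P : Matrix (Fin n) (Fin n) ℤ) *
            ((P⁻¹ : (Matrix (Fin n) (Fin n) ℤ)ˣ) : Matrix (Fin n) (Fin n) ℤ))ᵀ * G *
            ((P : Matrix (Fin n) (Fin n) ℤ) *
            ((P⁻¹ : (Matrix (Fin n) (Fin n) ℤ)ˣ) : Matrix (Fin n) (Fin n) ℤ)) := by
          simp only [Matrix.transpose_mul, Matrix.mul_assoc]
      _ = G := by rw [Units.mul_inv]; simp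
/-- The real symmetric bilinear form on `Fin N → ℝ` with matrix `G`. -/
def gramBilinR {N : ℕ} (G : Matrix (Fin N) (Fin N) ℤ) :
    (Fin N → ℝ) →ₗ[ℝ] (Fin N → ℝ) →ₗ[ℝ] ℝ :=
  LinearMap.mk₂ ℝ (fun x y => x ⬝ᵥ (G.map (Int.cast : ℤ → ℝ)).mulVec y)
    (fun x x' y => by simp only [add_dotProduct])
    (fun c x y => by simp only [smul_dotProduct])
    (fun x y y' => by simp only [Matrix.mulVec_add, dotProduct_add])
    (fun c x y => by simp only [Matrix.mulVec_smul, dotProduct_smul])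

/-- `L` is a full-rank lattice in the real quadratic space `(V, φ)` whose Gram matrix in some
basis is the integer matrix `G`; i.e. `L` is (as a lattice with the restricted form)
a copy of the lattice with Gram matrix `G`. -/
def SpansWithGram {V : Type*} [AddCommGroup V] [Module ℝ V]
    (φ : V →ₗ[ℝ] V →ₗ[ℝ] ℝ) {n : ℕ} (L : Submodule ℤ V) (G : Matrix (Fin n) (Fin n) ℤ) : Prop :=
  ∃ b : Module.Basis (Fin n) ℝ V, L = Submodule.span ℤ (Set.range ⇑b) ∧
    ∀ i j, φ (b i) (b j) = ((G i j : ℤ) : ℝ)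

/-- The dual of a subset `S` of a real quadratic space: vectors pairing integrally with `S`. -/
def dualSet {V : Type*} [AddCommGroup V] [Module ℝ V]
    (φ : V →ₗ[ℝ] V →ₗ[ℝ] ℝ) (S : Set V) : Set V :=
  {x | ∀ y ∈ S, ∃ k : ℤ, φ x y = (k : ℝ)}

/-- `M` is an odd unimodular full-rank lattice in the real quadratic space `(V, φ)`. -/
def IsOddUnimodularLat {V : Type*} [AddCommGroup V] [Module ℝ V]
    (φ : V →ₗ[ℝ] V →ₗ[ℝ] ℝ) (M : Submodule ℤ V) : Prop :=
  (∃ (m : ℕ) (H : Matrix (Fin m) (Fin m) ℤ), SpansWithGram φ M H ∧ IsUnit H.det) ∧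
    ¬ ∀ x ∈ M, ∃ k : ℤ, φ x x = 2 * (k : ℝ)

/-- The standard integer lattice inside `Fin N → ℝ`. -/
def stdLat (N : ℕ) : Submodule ℤ (Fin N → ℝ) :=
  Submodule.span ℤ (Set.range fun i : Fin N => (Pi.single i (1 : ℝ) : Fin N → ℝ))

/-- Coordinatewise inclusion `ℤ^N → ℚ^N`. -/
def intToRat (N : ℕ) : (Fin N → ℤ) →ₗ[ℤ] (Fin N → ℚ) where
  toFun x := fun i => (x i : ℚ)
  map_add' x y := by funext i; push_cast; simp
  map_smul' c x := by
    funext i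
    simp only [Pi.smul_apply, smul_eq_mul, RingHom.id_apply, zsmul_eq_mul]
    push_cast
    ring

/-- The dual lattice of `ℤ^N` (with the form given by the Gram matrix `G`)
inside `ℚ^N`. -/
def ratDual {N : ℕ} (G : Matrix (Fin N) (Fin N) ℤ) : Submodule ℤ (Fin N → ℚ) where
  carrier := {x | ∀ y : Fin N → ℤ, ∃ k : ℤ,
    x ⬝ᵥ (G.map (Int.cast : ℤ → ℚ)).mulVec (intToRat N y) = (k : ℚ)}
  zero_mem' := by intro y; exact ⟨0, by simp⟩
  add_mem' := by
    intro a b ha hb y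
    obtain ⟨k, hk⟩ := ha y
    obtain ⟨l, hl⟩ := hb y
    exact ⟨k + l, by rw [add_dotProduct, hk, hl]; push_cast; ring⟩
  smul_mem' := by
    intro c x hx y
    obtain ⟨k, hk⟩ := hx y
    refine ⟨c * k, ?_⟩
    show (c • x) ⬝ᵥ _ = _
    rw [smul_dotProduct, hk, zsmul_eq_mul]
    push_cast
    ring

/-- The set of vectors of `ℚ^N` pairing integrally with the sublattice `A` of `ℤ^N`,
with respect to the form with Gram matrix `G`. -/
def pairDual {N : ℕ} (G : Matrix (Fin N) (Fin N) ℤ) (A : Submodule ℤ (Fin N → ℤ)) :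
    Submodule ℤ (Fin N → ℚ) where
  carrier := {x | ∀ y ∈ A, ∃ k : ℤ,
    x ⬝ᵥ (G.map (Int.cast : ℤ → ℚ)).mulVec (intToRat N y) = (k : ℚ)}
  zero_mem' := by intro y _; exact ⟨0, by simp⟩
  add_mem' := by
    intro a b ha hb y hy
    obtain ⟨k, hk⟩ := ha y hy
    obtain ⟨l, hl⟩ := hb y hy
    exact ⟨k + l, by rw [add_dotProduct, hk, hl]; push_cast; ring⟩
  smul_mem' := by
    intro c x hx y hy
    obtain ⟨k, hk⟩ := hx y hy
    refine ⟨c * k, ?_⟩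
    show (c • x) ⬝ᵥ _ = _
    rw [smul_dotProduct, hk, zsmul_eq_mul]
    push_cast
    ring

/-- The dual lattice `A*` of a sublattice `A` of `ℤ^N`, taken inside `A ⊗ ℚ`
(realized as the ℚ-span of `A` in `ℚ^N`), with respect to the form with Gram matrix `G`. -/
def relDual {N : ℕ} (G : Matrix (Fin N) (Fin N) ℤ) (A : Submodule ℤ (Fin N → ℤ)) :
    Submodule ℤ (Fin N → ℚ) :=
  (Submodule.span ℚ (intToRat N '' (A : Set (Fin N → ℤ)))).restrictScalars ℤ ⊓ pairDual G A

/-- The orthogonal complement in `ℤ^N` (with Gram matrix `G`) of a sublattice `A`. -/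
def perpSub {N : ℕ} (G : Matrix (Fin N) (Fin N) ℤ) (A : Submodule ℤ (Fin N → ℤ)) :
    Submodule ℤ (Fin N → ℤ) where
  carrier := {x | ∀ a ∈ A, x ⬝ᵥ G.mulVec a = 0}
  zero_mem' := by intro a _; simp
  add_mem' := by
    intro x y hx hy a ha
    rw [add_dotProduct, hx a ha, hy a ha, add_zero]
  smul_mem' := by
    intro c x hx a ha
    show (c • x) ⬝ᵥ _ = 0
    rw [smul_dotProduct, hx a ha, smul_zero]

/-- A vector of a lattice is primitive if it is not a non-unit integer multiple. -/
def IsPrimVec {N : ℕ} (v : Fin N → ℤ) : Prop :=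
  ∀ (k : ℤ) (w : Fin N → ℤ), v = k • w → IsUnit k

/-- A sublattice `A` of `ℤ^N` is primitive if the quotient is torsion-free. -/
def IsPrimSub {N : ℕ} (A : Submodule ℤ (Fin N → ℤ)) : Prop :=
  ∀ (x : Fin N → ℤ) (k : ℤ), k ≠ 0 → k • x ∈ A → x ∈ A

/-- The quotient `A^⊥ / A` of `ℤ^N` (with Gram matrix `G`), with its induced bilinear form,
is isometric to the lattice with Gram matrix `H`: there is a surjection `π` from `A^⊥` with
kernel `A ∩ A^⊥` identifying the induced form with `H`. -/
def QuotIsometric {N m : ℕ} (G : Matrix (Fin N) (Fin N) ℤ) (A : Submodule ℤ (Fin N → ℤ))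
    (H : Matrix (Fin m) (Fin m) ℤ) : Prop :=
  ∃ π : (perpSub G A) →ₗ[ℤ] (Fin m → ℤ), Function.Surjective π ∧
    (∀ x : perpSub G A, π x = 0 ↔ (x : Fin N → ℤ) ∈ A) ∧
    (∀ x y : perpSub G A,
      (x : Fin N → ℤ) ⬝ᵥ G.mulVec (y : Fin N → ℤ) = π x ⬝ᵥ H.mulVec (π y))


section
variable {m : Type*} [Fintype m] [DecidableEq m]

def autSub (G : Matrix m m ℤ) : Subgroup (Matrix m m ℤ)ˣ where
  carrier := {P | (P : Matrix m m ℤ)ᵀ * G * (P : Matrix m m ℤ) = G}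
  one_mem' := by simp
  mul_mem' := by
    intro P Q hP hQ
    have hP' : (P : Matrix m m ℤ)ᵀ * G * (P : Matrix m m ℤ) = G := hP
    have hQ' : (Q : Matrix m m ℤ)ᵀ * G * (Q : Matrix m m ℤ) = G := hQ
    show ((P * Q : (Matrix m m ℤ)ˣ) : Matrix m m ℤ)ᵀ * G *
        ((P * Q : (Matrix m m ℤ)ˣ) : Matrix m m ℤ) = G
    have hc : ((P * Q : (Matrix m m ℤ)ˣ) : Matrix m m ℤ) =
        (P : Matrix m m ℤ) * (Q : Matrix m m ℤ) := rfl
    rw [hc, Matrix.transpose_mul]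
    calc (Q : Matrix m m ℤ)ᵀ * (P : Matrix m m ℤ)ᵀ * G *
          ((P : Matrix m m ℤ) * (Q : Matrix m m ℤ))
        = (Q : Matrix m m ℤ)ᵀ * ((P : Matrix m m ℤ)ᵀ * G * (P : Matrix m m ℤ)) *
            (Q : Matrix m m ℤ) := by simp only [Matrix.mul_assoc]
      _ = G := by rw [hP', hQ']
  inv_mem' := by
    intro P hP
    have hP' : (P : Matrix m m ℤ)ᵀ * G * (P : Matrix m m ℤ) = G := hP
    show ((P⁻¹ : (Matrix m m ℤ)ˣ) : Matrix m m ℤ)ᵀ * G *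
        ((P⁻¹ : (Matrix m m ℤ)ˣ) : Matrix m m ℤ) = G
    calc ((P⁻¹ : (Matrix m m ℤ)ˣ) : Matrix m m ℤ)ᵀ * G *
          ((P⁻¹ : (Matrix m m ℤ)ˣ) : Matrix m m ℤ)
        = ((P⁻¹ : (Matrix m m ℤ)ˣ) : Matrix m m ℤ)ᵀ *
            ((P : Matrix m m ℤ)ᵀ * G * (P : Matrix m m ℤ)) *
            ((P⁻¹ : (Matrix m m ℤ)ˣ) : Matrix m m ℤ) := by rw [hP']
      _ = ((P : Matrix m m ℤ) * ((P⁻¹ : (Matrix m m ℤ)ˣ) : Matrix m m ℤ))ᵀ * G *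
            ((P : Matrix m m ℤ) * ((P⁻¹ : (Matrix m m ℤ)ˣ) : Matrix m m ℤ)) := by
          simp only [Matrix.transpose_mul, Matrix.mul_assoc]
      _ = G := by rw [Units.mul_inv]; simp

theorem mem_autSub {G : Matrix m m ℤ} {P : (Matrix m m ℤ)ˣ} :
    P ∈ autSub G ↔ (P : Matrix m m ℤ)ᵀ * G * (P : Matrix m m ℤ) = G := Iff.rfl

theorem smul_cancel_mat (c : ℤ) (hc : c ≠ 0) {X Y : Matrix m m ℤ}
    (h : c • X = c • Y) : X = Y := by
  ext i j
  have := congrFun (congrFun (congrArg (fun M : Matrix m m ℤ => M) h) i) j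
  simp only [Matrix.smul_apply, smul_eq_mul] at this
  exact mul_left_cancel₀ hc this

end

section congrpart
set_option linter.unusedSectionVars false
variable {m : Type*} [Fintype m] [DecidableEq m]
variable {m' : Type*} [Fintype m'] [DecidableEq m']

theorem reindex_mulmat (e : m ≃ m') (X Y : Matrix m m ℤ) :
    (Matrix.reindex e e X) * (Matrix.reindex e e Y) = Matrix.reindex e e (X * Y) := by
  rw [Matrix.reindex_apply, Matrix.reindex_apply, Matrix.reindex_apply,
    Matrix.submatrix_mul_equiv]

theorem reindex_transpose (e : m ≃ m') (X : Matrix m m ℤ) :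
    (Matrix.reindex e e X)ᵀ = Matrix.reindex e e Xᵀ := by
  rw [Matrix.reindex_apply, Matrix.reindex_apply, Matrix.transpose_submatrix]

def autSubCongr (e : m ≃ m') (G : Matrix m m ℤ) :
    autSub G ≃* autSub (Matrix.reindex e e G) := by
  classical
  let σ : Matrix m m ℤ ≃* Matrix m' m' ℤ :=
    ((Matrix.reindexAlgEquiv ℤ ℤ e).toRingEquiv).toMulEquiv
  have hσ : ∀ X : Matrix m m ℤ, σ X = Matrix.reindex e e X := fun X => rfl
  have hσs : ∀ X : Matrix m' m' ℤ, σ.symm X = Matrix.reindex e.symm e.symm X := fun X => rfl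
  let μ : (Matrix m m ℤ)ˣ ≃* (Matrix m' m' ℤ)ˣ := Units.mapEquiv σ
  refine
    { toFun := fun u => ⟨μ u.1, ?_⟩
      invFun := fun v => ⟨μ.symm v.1, ?_⟩
      left_inv := fun u => Subtype.ext (μ.symm_apply_apply u.1)
      right_inv := fun v => Subtype.ext (μ.apply_symm_apply v.1)
      map_mul' := fun u v => Subtype.ext (map_mul μ u.1 v.1) }
  · -- forward membership
    have hu : (u.1 : Matrix m m ℤ)ᵀ * G * (u.1 : Matrix m m ℤ) = G := u.2
    show ((μ u.1 : (Matrix m' m' ℤ)ˣ) : Matrix m' m' ℤ)ᵀ * Matrix.reindex e e G *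
      ((μ u.1 : (Matrix m' m' ℤ)ˣ) : Matrix m' m' ℤ) = Matrix.reindex e e G
    have hval : ((μ u.1 : (Matrix m' m' ℤ)ˣ) : Matrix m' m' ℤ) =
        Matrix.reindex e e (u.1 : Matrix m m ℤ) := hσ _
    rw [hval, reindex_transpose, reindex_mulmat, reindex_mulmat, hu]
  · -- backward membership
    have hv : (v.1 : Matrix m' m' ℤ)ᵀ * Matrix.reindex e e G * (v.1 : Matrix m' m' ℤ)
        = Matrix.reindex e e G := v.2
    show ((μ.symm v.1 : (Matrix m m ℤ)ˣ) : Matrix m m ℤ)ᵀ * G *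
      ((μ.symm v.1 : (Matrix m m ℤ)ˣ) : Matrix m m ℤ) = G
    have hval : ((μ.symm v.1 : (Matrix m m ℤ)ˣ) : Matrix m m ℤ) =
        Matrix.reindex e.symm e.symm (v.1 : Matrix m' m' ℤ) := by
      show σ.symm _ = _
      exact hσs _
    have h2 := congrArg (⇑(Matrix.reindex e.symm e.symm)) hv
    rw [← reindex_mulmat, ← reindex_mulmat, ← reindex_transpose] at h2

    rw [hval]
    simpa using h2
end congrpart

section dualconj
set_option linter.unusedSectionVars false
variable {m : Type*} [Fintype m] [DecidableEq m]

/-- Key computation for the duality map. -/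
theorem dual_key {G H P P' : Matrix m m ℤ} (hG : Gᵀ = G) (hH : Hᵀ = H)
    (hGH : G * H = (2 : ℤ) • 1) (hHG : H * G = (2 : ℤ) • 1)
    (hPP' : P * P' = 1) (hP'P : P' * P = 1)
    (hP : Pᵀ * G * P = G) : (P'ᵀ)ᵀ * H * P'ᵀ = H := by
  have step1 : Pᵀ * G = G * P' := by
    have := congrArg (fun X => X * P') hP
    simpa [Matrix.mul_assoc, hPP'] using this
  have step2 : (2 : ℤ) • (P' * H) = (2 : ℤ) • (H * Pᵀ) := by
    calc (2 : ℤ) • (P' * H) = ((2 : ℤ) • (1 : Matrix m m ℤ)) * P' * H := by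
          rw [Matrix.smul_mul, Matrix.one_mul, Matrix.smul_mul]
      _ = H * (G * P') * H := by
          rw [← hHG]
          simp only [Matrix.mul_assoc]
      _ = H * (Pᵀ * G) * H := by rw [step1]
      _ = H * Pᵀ * ((2:ℤ) • (1 : Matrix m m ℤ)) := by
          rw [← hGH, Matrix.mul_assoc, Matrix.mul_assoc, Matrix.mul_assoc]
      _ = (2 : ℤ) • (H * Pᵀ) := by rw [Matrix.mul_smul, Matrix.mul_one]
  have step3 : P' * H = H * Pᵀ := smul_cancel_mat 2 (by norm_num) step2
  calc (P'ᵀ)ᵀ * H * P'ᵀ = P' * H * P'ᵀ := by rw [Matrix.transpose_transpose]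
    _ = H * Pᵀ * P'ᵀ := by rw [step3]
    _ = H * (P' * P)ᵀ := by rw [Matrix.transpose_mul, Matrix.mul_assoc]
    _ = H := by rw [hP'P, Matrix.transpose_one, Matrix.mul_one]

/-- Duality isomorphism `P ↦ (P⁻¹)ᵀ` between `autSub G` and `autSub H` when `G * H = 2`. -/
def autSubDual (G H : Matrix m m ℤ) (hG : Gᵀ = G) (hH : Hᵀ = H)
    (hGH : G * H = (2 : ℤ) • 1) (hHG : H * G = (2 : ℤ) • 1) :
    autSub G ≃* autSub H := by
  refine
    { toFun := fun u => ⟨⟨(u.1.inv)ᵀ, (u.1.val)ᵀ,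
        by rw [← Matrix.transpose_mul, u.1.val_inv, Matrix.transpose_one],
        by rw [← Matrix.transpose_mul, u.1.inv_val, Matrix.transpose_one]⟩, ?_⟩
      invFun := fun v => ⟨⟨(v.1.inv)ᵀ, (v.1.val)ᵀ,
        by rw [← Matrix.transpose_mul, v.1.val_inv, Matrix.transpose_one],
        by rw [← Matrix.transpose_mul, v.1.inv_val, Matrix.transpose_one]⟩, ?_⟩
      left_inv := fun u => Subtype.ext (Units.ext (Matrix.transpose_transpose _))
      right_inv := fun v => Subtype.ext (Units.ext (Matrix.transpose_transpose _))
      map_mul' := fun u v => Subtype.ext (Units.ext (by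
        show ((u.1 * v.1).inv)ᵀ = (u.1.inv)ᵀ * (v.1.inv)ᵀ
        show ((v.1.inv) * (u.1.inv))ᵀ = (u.1.inv)ᵀ * (v.1.inv)ᵀ
        rw [Matrix.transpose_mul])) }
  · exact dual_key hG hH hGH hHG u.1.val_inv u.1.inv_val u.2
  · exact dual_key hH hG hHG hGH v.1.val_inv v.1.inv_val v.2
end dualconj

section conjpart
set_option linter.unusedSectionVars false
variable {m : Type*} [Fintype m] [DecidableEq m]

theorem conj_key {G H W W' P : Matrix m m ℤ} (hWW' : W * W' = 1) (hW'W : W' * W = 1)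
    (hW : Wᵀ * G * W = H) (hP : Pᵀ * G * P = G) :
    (W' * P * W)ᵀ * H * (W' * P * W) = H := by
  have hW2 : W'ᵀ * H * W' = G := by
    rw [← hW]
    calc W'ᵀ * (Wᵀ * G * W) * W' = (W * W')ᵀ * G * (W * W') := by
          simp only [Matrix.transpose_mul, Matrix.mul_assoc]
      _ = G := by rw [hWW']; simp
  calc (W' * P * W)ᵀ * H * (W' * P * W)
      = Wᵀ * (Pᵀ * (W'ᵀ * H * W') * P) * W := by
        simp only [Matrix.transpose_mul, Matrix.mul_assoc]
    _ = Wᵀ * G * W := by rw [hW2, hP]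
    _ = H := hW

/-- Conjugation isomorphism between `autSub G` and `autSub H` when `Wᵀ G W = H`. -/
def autSubConj (G H W W' : Matrix m m ℤ) (hWW' : W * W' = 1) (hW'W : W' * W = 1)
    (hW : Wᵀ * G * W = H) : autSub G ≃* autSub H := by
  have hW2 : W'ᵀ * H * W' = G := by
    rw [← hW]
    calc W'ᵀ * (Wᵀ * G * W) * W' = (W * W')ᵀ * G * (W * W') := by
          simp only [Matrix.transpose_mul, Matrix.mul_assoc]
      _ = G := by rw [hWW']; simp
  refine
    { toFun := fun u => ⟨⟨W' * u.1.val * W, W' * u.1.inv * W, ?_, ?_⟩, ?_⟩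
      invFun := fun v => ⟨⟨W * v.1.val * W', W * v.1.inv * W', ?_, ?_⟩, ?_⟩
      left_inv := fun u => Subtype.ext (Units.ext ?_)
      right_inv := fun v => Subtype.ext (Units.ext ?_)
      map_mul' := fun u v => Subtype.ext (Units.ext ?_) }
  · calc W' * u.1.val * W * (W' * u.1.inv * W)
        = W' * (u.1.val * (W * W') * u.1.inv) * W := by simp only [Matrix.mul_assoc]
      _ = 1 := by rw [hWW']; simp only [Matrix.mul_one, u.1.val_inv]; exact hW'W
  · calc W' * u.1.inv * W * (W' * u.1.val * W)
        = W' * (u.1.inv * (W * W') * u.1.val) * W := by simp only [Matrix.mul_assoc]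
      _ = 1 := by rw [hWW']; simp only [Matrix.mul_one, u.1.inv_val]; exact hW'W
  · exact conj_key hWW' hW'W hW u.2
  · calc W * v.1.val * W' * (W * v.1.inv * W')
        = W * (v.1.val * (W' * W) * v.1.inv) * W' := by simp only [Matrix.mul_assoc]
      _ = 1 := by rw [hW'W]; simp only [Matrix.mul_one, v.1.val_inv]; exact hWW'
  · calc W * v.1.inv * W' * (W * v.1.val * W')
        = W * (v.1.inv * (W' * W) * v.1.val) * W' := by simp only [Matrix.mul_assoc]
      _ = 1 := by rw [hW'W]; simp only [Matrix.mul_one, v.1.inv_val]; exact hWW'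
  · exact conj_key hW'W hWW' hW2 v.2
  · show W * (W' * u.1.val * W) * W' = u.1.val
    calc W * (W' * u.1.val * W) * W' = (W * W') * u.1.val * (W * W') := by
          simp only [Matrix.mul_assoc]
      _ = u.1.val := by rw [hWW']; simp
  · show W' * (W * v.1.val * W') * W = v.1.val
    calc W' * (W * v.1.val * W') * W = (W' * W) * v.1.val * (W' * W) := by
          simp only [Matrix.mul_assoc]
      _ = v.1.val := by rw [hW'W]; simp
  · show W' * (u.1.val * v.1.val) * W = (W' * u.1.val * W) * (W' * v.1.val * W)
    calc W' * (u.1.val * v.1.val) * W = W' * (u.1.val * (W * W') * v.1.val) * W := by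
          rw [hWW']; simp
      _ = (W' * u.1.val * W) * (W' * v.1.val * W) := by simp only [Matrix.mul_assoc]
end conjpart

section halfpart
set_option linter.unusedSectionVars false
variable {m : Type*} [Fintype m] [DecidableEq m]

/-- Entrywise halving of an integer matrix. -/
def hlf (X : Matrix m m ℤ) : Matrix m m ℤ := X.map (· / 2)

theorem two_smul_hlf (X : Matrix m m ℤ) (h : ∀ i j, Even (X i j)) :
    (2 : ℤ) • hlf X = X := by
  ext i j
  have := h i j
  obtain ⟨k, hk⟩ := this
  simp only [hlf, Matrix.smul_apply, Matrix.map_apply, smul_eq_mul]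
  omega

theorem four_smul_mul (A B : Matrix m m ℤ) :
    ((2 : ℤ) • A) * ((2 : ℤ) • B) = (4 : ℤ) • (A * B) := by
  rw [Matrix.smul_mul, Matrix.mul_smul, smul_smul]
  norm_num

/-- The halving isomorphism. -/
def autSubHalf (G H T S : Matrix m m ℤ)
    (hTS : T * S = (2 : ℤ) • 1) (hST : S * T = (2 : ℤ) • 1)
    (hT : Tᵀ * H * T = G) (hS : Sᵀ * G * S = (4 : ℤ) • H)
    (hEf : ∀ P P' : Matrix m m ℤ, P * P' = 1 → P' * P = 1 → Pᵀ * G * P = G →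
      ∀ i j, Even ((T * P * S) i j))
    (hEg : ∀ Q Q' : Matrix m m ℤ, Q * Q' = 1 → Q' * Q = 1 → Qᵀ * H * Q = H →
      ∀ i j, Even ((S * Q * T) i j)) :
    autSub G ≃* autSub H := by
  have cancel4 : ∀ {X Y : Matrix m m ℤ}, (4 : ℤ) • X = (4 : ℤ) • Y → X = Y :=
    fun h => smul_cancel_mat 4 (by norm_num) h
  have derive_inv : ∀ K P P' : Matrix m m ℤ, P * P' = 1 → P' * P = 1 →
      Pᵀ * K * P = K → P'ᵀ * K * P' = K := by
    intro K P P' h1 h2 hP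
    calc P'ᵀ * K * P' = P'ᵀ * (Pᵀ * K * P) * P' := by rw [hP]
      _ = (P * P')ᵀ * K * (P * P') := by simp only [Matrix.transpose_mul, Matrix.mul_assoc]
      _ = K := by rw [h1]; simp
  have prod1 : ∀ P Q : Matrix m m ℤ, (T * P * S) * (T * Q * S) = (2 : ℤ) • (T * (P * Q) * S) := by
    intro P Q
    calc (T * P * S) * (T * Q * S) = (T * P) * ((S * T) * (Q * S)) := by
          simp only [Matrix.mul_assoc]
      _ = (T * P) * (((2:ℤ) • 1) * (Q * S)) := by rw [hST]
      _ = (2 : ℤ) • (T * (P * Q) * S) := by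
          rw [Matrix.smul_mul, Matrix.one_mul, Matrix.mul_smul]
          simp only [Matrix.mul_assoc]
  have prod2 : ∀ P Q : Matrix m m ℤ, (S * P * T) * (S * Q * T) = (2 : ℤ) • (S * (P * Q) * T) := by
    intro P Q
    calc (S * P * T) * (S * Q * T) = (S * P) * ((T * S) * (Q * T)) := by
          simp only [Matrix.mul_assoc]
      _ = (S * P) * (((2:ℤ) • 1) * (Q * T)) := by rw [hTS]
      _ = (2 : ℤ) • (S * (P * Q) * T) := by
          rw [Matrix.smul_mul, Matrix.one_mul, Matrix.mul_smul]
          simp only [Matrix.mul_assoc]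
  have prod3 : ∀ P : Matrix m m ℤ, S * (T * P * S) * T = (4 : ℤ) • P := by
    intro P
    calc S * (T * P * S) * T = (S * T) * P * (S * T) := by simp only [Matrix.mul_assoc]
      _ = (4 : ℤ) • P := by rw [hST, Matrix.smul_mul, Matrix.mul_smul, Matrix.one_mul,
            Matrix.mul_one, smul_smul]; norm_num
  have prod4 : ∀ P : Matrix m m ℤ, T * (S * P * T) * S = (4 : ℤ) • P := by
    intro P
    calc T * (S * P * T) * S = (T * S) * P * (T * S) := by simp only [Matrix.mul_assoc]
      _ = (4 : ℤ) • P := by rw [hTS, Matrix.smul_mul, Matrix.mul_smul, Matrix.one_mul,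
            Matrix.mul_one, smul_smul]; norm_num
  -- forward data
  have fmul : ∀ P Q : Matrix m m ℤ, (∀ i j, Even ((T * P * S) i j)) →
      (∀ i j, Even ((T * Q * S) i j)) → (∀ i j, Even ((T * (P * Q) * S) i j)) →
      hlf (T * P * S) * hlf (T * Q * S) = hlf (T * (P * Q) * S) := by
    intro P Q e1 e2 e3
    apply cancel4
    calc (4 : ℤ) • (hlf (T * P * S) * hlf (T * Q * S))
        = ((2:ℤ) • hlf (T * P * S)) * ((2:ℤ) • hlf (T * Q * S)) := (four_smul_mul _ _).symm
      _ = (T * P * S) * (T * Q * S) := by rw [two_smul_hlf _ e1, two_smul_hlf _ e2]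
      _ = (2 : ℤ) • (T * (P * Q) * S) := prod1 P Q
      _ = (2 : ℤ) • ((2:ℤ) • hlf (T * (P * Q) * S)) := by rw [two_smul_hlf _ e3]
      _ = (4 : ℤ) • hlf (T * (P * Q) * S) := by rw [smul_smul]; norm_num
  have gmul : ∀ P Q : Matrix m m ℤ, (∀ i j, Even ((S * P * T) i j)) →
      (∀ i j, Even ((S * Q * T) i j)) → (∀ i j, Even ((S * (P * Q) * T) i j)) →
      hlf (S * P * T) * hlf (S * Q * T) = hlf (S * (P * Q) * T) := by
    intro P Q e1 e2 e3
    apply cancel4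
    calc (4 : ℤ) • (hlf (S * P * T) * hlf (S * Q * T))
        = ((2:ℤ) • hlf (S * P * T)) * ((2:ℤ) • hlf (S * Q * T)) := (four_smul_mul _ _).symm
      _ = (S * P * T) * (S * Q * T) := by rw [two_smul_hlf _ e1, two_smul_hlf _ e2]
      _ = (2 : ℤ) • (S * (P * Q) * T) := prod2 P Q
      _ = (2 : ℤ) • ((2:ℤ) • hlf (S * (P * Q) * T)) := by rw [two_smul_hlf _ e3]
      _ = (4 : ℤ) • hlf (S * (P * Q) * T) := by rw [smul_smul]; norm_num
  have hone : hlf (T * (1 : Matrix m m ℤ) * S) = 1 := by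
    apply smul_cancel_mat 2 (by norm_num)
    rw [two_smul_hlf]
    · rw [Matrix.mul_one, hTS]
    · intro i j
      have : T * (1 : Matrix m m ℤ) * S = (2:ℤ) • 1 := by rw [Matrix.mul_one, hTS]
      rw [this]
      refine ⟨(1 : Matrix m m ℤ) i j, ?_⟩
      simp [two_mul]
  have hone' : hlf (S * (1 : Matrix m m ℤ) * T) = 1 := by
    apply smul_cancel_mat 2 (by norm_num)
    rw [two_smul_hlf]
    · rw [Matrix.mul_one, hST]
    · intro i j
      have : S * (1 : Matrix m m ℤ) * T = (2:ℤ) • 1 := by rw [Matrix.mul_one, hST]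
      rw [this]
      refine ⟨(1 : Matrix m m ℤ) i j, ?_⟩
      simp [two_mul]
  have fmem : ∀ P P' : Matrix m m ℤ, P * P' = 1 → P' * P = 1 → Pᵀ * G * P = G →
      (hlf (T * P * S))ᵀ * H * hlf (T * P * S) = H := by
    intro P P' h1 h2 hP
    apply cancel4
    have ev := hEf P P' h1 h2 hP
    calc (4 : ℤ) • ((hlf (T * P * S))ᵀ * H * hlf (T * P * S))
        = ((2:ℤ) • hlf (T * P * S))ᵀ * H * ((2:ℤ) • hlf (T * P * S)) := by
          rw [Matrix.transpose_smul, Matrix.smul_mul, Matrix.mul_smul, Matrix.smul_mul,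
            smul_smul]
          norm_num
      _ = (T * P * S)ᵀ * H * (T * P * S) := by rw [two_smul_hlf _ ev]
      _ = Sᵀ * (Pᵀ * (Tᵀ * H * T) * P) * S := by
          simp only [Matrix.transpose_mul, Matrix.mul_assoc]
      _ = Sᵀ * G * S := by rw [hT, hP]
      _ = (4 : ℤ) • H := hS
  have gmem : ∀ Q Q' : Matrix m m ℤ, Q * Q' = 1 → Q' * Q = 1 → Qᵀ * H * Q = H →
      (hlf (S * Q * T))ᵀ * G * hlf (S * Q * T) = G := by
    intro Q Q' h1 h2 hQ
    apply cancel4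
    have ev := hEg Q Q' h1 h2 hQ
    calc (4 : ℤ) • ((hlf (S * Q * T))ᵀ * G * hlf (S * Q * T))
        = ((2:ℤ) • hlf (S * Q * T))ᵀ * G * ((2:ℤ) • hlf (S * Q * T)) := by
          rw [Matrix.transpose_smul, Matrix.smul_mul, Matrix.mul_smul, Matrix.smul_mul,
            smul_smul]
          norm_num
      _ = (S * Q * T)ᵀ * G * (S * Q * T) := by rw [two_smul_hlf _ ev]
      _ = Tᵀ * (Qᵀ * (Sᵀ * G * S) * Q) * T := by
          simp only [Matrix.transpose_mul, Matrix.mul_assoc]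
      _ = Tᵀ * ((4:ℤ) • (Qᵀ * H * Q)) * T := by
          rw [hS]
          simp only [Matrix.smul_mul, Matrix.mul_smul]
      _ = (4 : ℤ) • G := by
          rw [hQ]
          simp only [Matrix.smul_mul, Matrix.mul_smul, hT]
  refine
    { toFun := fun u => ⟨⟨hlf (T * u.1.val * S), hlf (T * u.1.inv * S), ?_, ?_⟩, ?_⟩
      invFun := fun v => ⟨⟨hlf (S * v.1.val * T), hlf (S * v.1.inv * T), ?_, ?_⟩, ?_⟩
      left_inv := fun u => Subtype.ext (Units.ext ?_)
      right_inv := fun v => Subtype.ext (Units.ext ?_)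
      map_mul' := fun u v => Subtype.ext (Units.ext ?_) }
  · -- val * inv = 1
    have hP := u.2
    have hP' := derive_inv G u.1.val u.1.inv u.1.val_inv u.1.inv_val hP
    rw [fmul _ _ (hEf _ _ u.1.val_inv u.1.inv_val hP) (hEf _ _ u.1.inv_val u.1.val_inv hP')
      (by rw [u.1.val_inv]; exact hEf 1 1 (by simp) (by simp) (by simp)),
      u.1.val_inv, hone]
  · have hP := u.2
    have hP' := derive_inv G u.1.val u.1.inv u.1.val_inv u.1.inv_val hP
    rw [fmul _ _ (hEf _ _ u.1.inv_val u.1.val_inv hP') (hEf _ _ u.1.val_inv u.1.inv_val hP)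
      (by rw [u.1.inv_val]; exact hEf 1 1 (by simp) (by simp) (by simp)),
      u.1.inv_val, hone]
  · exact fmem u.1.val u.1.inv u.1.val_inv u.1.inv_val u.2
  · have hQ := v.2
    have hQ' := derive_inv H v.1.val v.1.inv v.1.val_inv v.1.inv_val hQ
    rw [gmul _ _ (hEg _ _ v.1.val_inv v.1.inv_val hQ) (hEg _ _ v.1.inv_val v.1.val_inv hQ')
      (by rw [v.1.val_inv]; exact hEg 1 1 (by simp) (by simp) (by simp)),
      v.1.val_inv, hone']
  · have hQ := v.2
    have hQ' := derive_inv H v.1.val v.1.inv v.1.val_inv v.1.inv_val hQ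
    rw [gmul _ _ (hEg _ _ v.1.inv_val v.1.val_inv hQ') (hEg _ _ v.1.val_inv v.1.inv_val hQ)
      (by rw [v.1.inv_val]; exact hEg 1 1 (by simp) (by simp) (by simp)),
      v.1.inv_val, hone']
  · exact gmem v.1.val v.1.inv v.1.val_inv v.1.inv_val v.2
  · -- left_inv : hlf (S * hlf (T * P * S) * T) = P
    have hP := u.2
    have hP' := derive_inv G u.1.val u.1.inv u.1.val_inv u.1.inv_val hP
    have evP := hEf _ _ u.1.val_inv u.1.inv_val hP
    have memH := fmem u.1.val u.1.inv u.1.val_inv u.1.inv_val hP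
    have hinv1 : hlf (T * u.1.val * S) * hlf (T * u.1.inv * S) = 1 := by
      rw [fmul _ _ evP (hEf _ _ u.1.inv_val u.1.val_inv hP')
        (by rw [u.1.val_inv]; exact hEf 1 1 (by simp) (by simp) (by simp)),
        u.1.val_inv, hone]
    have hinv2 : hlf (T * u.1.inv * S) * hlf (T * u.1.val * S) = 1 := by
      rw [fmul _ _ (hEf _ _ u.1.inv_val u.1.val_inv hP') evP
        (by rw [u.1.inv_val]; exact hEf 1 1 (by simp) (by simp) (by simp)),
        u.1.inv_val, hone]
    have evQ := hEg _ _ hinv1 hinv2 memH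
    show hlf (S * hlf (T * u.1.val * S) * T) = u.1.val
    apply cancel4
    calc (4:ℤ) • hlf (S * hlf (T * u.1.val * S) * T)
        = (2:ℤ) • ((2:ℤ) • hlf (S * hlf (T * u.1.val * S) * T)) := by
          rw [smul_smul]; norm_num
      _ = (2:ℤ) • (S * hlf (T * u.1.val * S) * T) := by rw [two_smul_hlf _ evQ]
      _ = S * ((2:ℤ) • hlf (T * u.1.val * S)) * T := by
          rw [Matrix.mul_smul, Matrix.smul_mul]
      _ = S * (T * u.1.val * S) * T := by rw [two_smul_hlf _ evP]
      _ = (4:ℤ) • u.1.val := prod3 _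
  · -- right_inv
    have hQ := v.2
    have hQ' := derive_inv H v.1.val v.1.inv v.1.val_inv v.1.inv_val hQ
    have evQ := hEg _ _ v.1.val_inv v.1.inv_val hQ
    have memG := gmem v.1.val v.1.inv v.1.val_inv v.1.inv_val hQ
    have hinv1 : hlf (S * v.1.val * T) * hlf (S * v.1.inv * T) = 1 := by
      rw [gmul _ _ evQ (hEg _ _ v.1.inv_val v.1.val_inv hQ')
        (by rw [v.1.val_inv]; exact hEg 1 1 (by simp) (by simp) (by simp)),
        v.1.val_inv, hone']
    have hinv2 : hlf (S * v.1.inv * T) * hlf (S * v.1.val * T) = 1 := by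
      rw [gmul _ _ (hEg _ _ v.1.inv_val v.1.val_inv hQ') evQ
        (by rw [v.1.inv_val]; exact hEg 1 1 (by simp) (by simp) (by simp)),
        v.1.inv_val, hone']
    have evP := hEf _ _ hinv1 hinv2 memG
    show hlf (T * hlf (S * v.1.val * T) * S) = v.1.val
    apply cancel4
    calc (4:ℤ) • hlf (T * hlf (S * v.1.val * T) * S)
        = (2:ℤ) • ((2:ℤ) • hlf (T * hlf (S * v.1.val * T) * S)) := by
          rw [smul_smul]; norm_num
      _ = (2:ℤ) • (T * hlf (S * v.1.val * T) * S) := by rw [two_smul_hlf _ evP]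
      _ = T * ((2:ℤ) • hlf (S * v.1.val * T)) * S := by
          rw [Matrix.mul_smul, Matrix.smul_mul]
      _ = T * (S * v.1.val * T) * S := by rw [two_smul_hlf _ evQ]
      _ = (4:ℤ) • v.1.val := prod4 _
  · -- map_mul
    have hPu := u.2
    have hPv := v.2
    have hPuv : (u.1.val * v.1.val)ᵀ * G * (u.1.val * v.1.val) = G := (u * v).2
    have huv1 : (u.1.val * v.1.val) * (v.1.inv * u.1.inv) = 1 := by
      calc (u.1.val * v.1.val) * (v.1.inv * u.1.inv)
          = u.1.val * (v.1.val * v.1.inv) * u.1.inv := by simp only [Matrix.mul_assoc]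
        _ = 1 := by rw [v.1.val_inv, Matrix.mul_one, u.1.val_inv]
    have huv2 : (v.1.inv * u.1.inv) * (u.1.val * v.1.val) = 1 := by
      calc (v.1.inv * u.1.inv) * (u.1.val * v.1.val)
          = v.1.inv * (u.1.inv * u.1.val) * v.1.val := by simp only [Matrix.mul_assoc]
        _ = 1 := by rw [u.1.inv_val, Matrix.mul_one, v.1.inv_val]
    show hlf (T * (u.1.val * v.1.val) * S) = hlf (T * u.1.val * S) * hlf (T * v.1.val * S)
    rw [fmul _ _ (hEf _ _ u.1.val_inv u.1.inv_val hPu) (hEf _ _ v.1.val_inv v.1.inv_val hPv)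
      (hEf _ _ huv1 huv2 hPuv)]
end halfpart
/-- The 2×2 base change between `I_{1,1}` and `II_{1,1}(2)`. -/
def Msp : Matrix (Fin 2) (Fin 2) ℤ := !![1, 1; 1, -1]

theorem Msp_mul_Msp : Msp * Msp = (2 : ℤ) • 1 := by
  ext i j
  fin_cases i <;> fin_cases j <;>
    simp [Msp, Matrix.mul_apply, Fin.sum_univ_two] <;> norm_num

theorem quad_eq {k : Type*} [Fintype k] [DecidableEq k] (K X : Matrix k k ℤ)
    (h : Xᵀ * K * X = K) (v : k → ℤ) :
    (X *ᵥ v) ⬝ᵥ (K *ᵥ (X *ᵥ v)) = v ⬝ᵥ (K *ᵥ v) := by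
  rw [Matrix.mulVec_mulVec, ← Matrix.vecMul_transpose, ← Matrix.dotProduct_mulVec,
    Matrix.mulVec_mulVec, ← Matrix.mul_assoc, h]

section E1
variable {n : ℕ}

theorem even_TPS (GB : Matrix (Fin n) (Fin n) ℤ)
    (heven : EvenGram GB) (hunim : IsUnit GB.det)
    (P P' : Matrix (Fin n ⊕ Fin 2) (Fin n ⊕ Fin 2) ℤ)
    (hPP' : P * P' = 1) (hP'P : P' * P = 1)
    (hP : Pᵀ * (Matrix.fromBlocks GB 0 0 ((2:ℤ) • gramII)) * P
        = Matrix.fromBlocks GB 0 0 ((2:ℤ) • gramII)) :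
    ∀ i j, Even (((Matrix.fromBlocks (1 : Matrix (Fin n) (Fin n) ℤ) 0 0 Msp) * P *
      (Matrix.fromBlocks ((2:ℤ) • (1 : Matrix (Fin n) (Fin n) ℤ)) 0 0 Msp)) i j) := by
  set G : Matrix (Fin n ⊕ Fin 2) (Fin n ⊕ Fin 2) ℤ :=
    Matrix.fromBlocks GB 0 0 ((2:ℤ) • gramII) with hGdef
  set u : Fin n ⊕ Fin 2 → ℤ := Sum.elim 0 (fun _ => 1) with hudef
  -- G *ᵥ u = 2 • u
  have hu : G *ᵥ u = (2:ℤ) • u := by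
    rw [hGdef, hudef, Matrix.fromBlocks_mulVec]
    funext i
    cases i with
    | inl i => simp
    | inr a =>
      fin_cases a <;>
        simp [Matrix.mulVec, dotProduct, gramII, Fin.sum_univ_two]
  have hGP : G * P = P'ᵀ * G := by
    have h1 := congrArg (fun X => P'ᵀ * X) hP
    calc G * P = (P * P')ᵀ * G * P := by rw [hPP']; simp
      _ = P'ᵀ * (Pᵀ * G * P) := by
          simp only [Matrix.transpose_mul, Matrix.mul_assoc]
      _ = P'ᵀ * G := by rw [hP]
  set s : Fin n ⊕ Fin 2 → ℤ := P *ᵥ u with hsdef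
  set w : Fin n ⊕ Fin 2 → ℤ := P'ᵀ *ᵥ u with hwdef
  have hGs : G *ᵥ s = (2:ℤ) • w := by
    rw [hsdef, Matrix.mulVec_mulVec, hGP, ← Matrix.mulVec_mulVec, hu,
      Matrix.mulVec_smul, hwdef]
  set a : Fin n → ℤ := fun i => s (Sum.inl i) with hadef
  set d : Fin 2 → ℤ := fun b => s (Sum.inr b) with hddef
  have hselim : s = Sum.elim a d := by funext i; cases i <;> rfl
  have hGBa : GB *ᵥ a = (2:ℤ) • (fun i => w (Sum.inl i)) := by
    funext i
    have := congrFun hGs (Sum.inl i)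
    rw [hselim, hGdef, Matrix.fromBlocks_mulVec] at this
    simpa using this
  -- a is even
  have ha : ∀ i, a i = 2 * ((GB⁻¹ *ᵥ (fun i => w (Sum.inl i))) i) := by
    intro i
    have h1 : GB⁻¹ *ᵥ (GB *ᵥ a) = a := by
      rw [Matrix.mulVec_mulVec, Matrix.nonsing_inv_mul GB hunim, Matrix.one_mulVec]
    have h2 := congrFun h1 i
    rw [hGBa, Matrix.mulVec_smul] at h2
    rw [← h2]
    simp [mul_comm]
  -- norm of s is 4
  have hnorm : s ⬝ᵥ (G *ᵥ s) = 4 := by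
    rw [hsdef, quad_eq G P hP, hu]
    rw [hudef]
    simp [dotProduct, Fintype.sum_sum_type, Fin.sum_univ_two]
  -- decompose the norm
  have hsplit : s ⬝ᵥ (G *ᵥ s) = a ⬝ᵥ (GB *ᵥ a) + d ⬝ᵥ (((2:ℤ) • gramII) *ᵥ d) := by
    rw [hselim, hGdef, Matrix.fromBlocks_mulVec]
    simp [dotProduct, Fintype.sum_sum_type]
  have hdpart : d ⬝ᵥ (((2:ℤ) • gramII) *ᵥ d) = 4 * (d 0 * d 1) := by
    simp [Matrix.mulVec, dotProduct, gramII, Fin.sum_univ_two]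
    ring
  have hapart : ∃ t : ℤ, a ⬝ᵥ (GB *ᵥ a) = 8 * t := by
    set k : Fin n → ℤ := GB⁻¹ *ᵥ (fun i => w (Sum.inl i)) with hkdef
    have hak : a = (2:ℤ) • k := by funext i; rw [ha i]; simp [hkdef, mul_comm]
    obtain ⟨t, ht⟩ := heven k
    refine ⟨t, ?_⟩
    rw [hak]
    rw [Matrix.mulVec_smul, smul_dotProduct, dotProduct_smul]
    rw [show k ⬝ᵥ (GB *ᵥ k) = t + t from ht]
    simp only [smul_eq_mul]
    ring
  obtain ⟨t, ht⟩ := hapart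
  have hd01 : d 0 * d 1 = 1 - 2 * t := by
    have := hnorm
    rw [hsplit, ht, hdpart] at this
    linarith
  have hodd : Odd (d 0) ∧ Odd (d 1) := by
    rw [← Int.odd_mul]
    rw [hd01]
    exact ⟨-t, by ring⟩
  -- entry values of s
  have hsval : ∀ i0 : Fin n ⊕ Fin 2, s i0 = P i0 (Sum.inr 0) + P i0 (Sum.inr 1) := by
    intro i0
    rw [hsdef, hudef]
    simp [Matrix.mulVec, dotProduct, Fintype.sum_sum_type, Fin.sum_univ_two]
  -- now the block decomposition of the product
  have hPblocks : P = Matrix.fromBlocks P.toBlocks₁₁ P.toBlocks₁₂ P.toBlocks₂₁ P.toBlocks₂₂ :=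
    (Matrix.fromBlocks_toBlocks P).symm
  set A := P.toBlocks₁₁
  set B := P.toBlocks₁₂
  set C := P.toBlocks₂₁
  set D := P.toBlocks₂₂
  have hprod : (Matrix.fromBlocks (1 : Matrix (Fin n) (Fin n) ℤ) 0 0 Msp) * P *
      (Matrix.fromBlocks ((2:ℤ) • (1 : Matrix (Fin n) (Fin n) ℤ)) 0 0 Msp)
      = Matrix.fromBlocks (A * ((2:ℤ) • (1 : Matrix (Fin n) (Fin n) ℤ))) (B * Msp)
        (Msp * C * ((2:ℤ) • (1 : Matrix (Fin n) (Fin n) ℤ))) (Msp * D * Msp) := by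
    rw [hPblocks]
    rw [Matrix.fromBlocks_multiply, Matrix.fromBlocks_multiply]
    congr 1 <;> simp
  intro i j
  rw [hprod]
  obtain ⟨t1, ht1⟩ := hodd.1
  obtain ⟨t2, ht2⟩ := hodd.2
  have hd0 : D 0 0 + D 0 1 = 2 * t1 + 1 := by
    have h2 : d 0 = D 0 0 + D 0 1 := hsval (Sum.inr 0)
    rw [← h2]; exact ht1
  have hd1 : D 1 0 + D 1 1 = 2 * t2 + 1 := by
    have h2 : d 1 = D 1 0 + D 1 1 := hsval (Sum.inr 1)
    rw [← h2]; exact ht2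
  cases i with
  | inl i =>
    cases j with
    | inl j =>
      rw [Matrix.fromBlocks_apply₁₁]
      rw [show A * ((2:ℤ) • (1 : Matrix (Fin n) (Fin n) ℤ)) = (2:ℤ) • A by
        rw [Matrix.mul_smul, Matrix.mul_one]]
      exact ⟨A i j, by simp [two_mul]⟩
    | inr b =>
      rw [Matrix.fromBlocks_apply₁₂]
      have hBsum : Even (B i 0 + B i 1) := by
        have h1 := ha i
        have h2 : a i = B i 0 + B i 1 := hsval (Sum.inl i)
        rw [h2] at h1
        exact ⟨_, by rw [h1]; ring⟩
      obtain ⟨r, hr⟩ := hBsum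
      rw [Int.even_iff]
      fin_cases b <;>
        simp [Msp, Matrix.mul_apply, Fin.sum_univ_two] <;> omega
  | inr a0 =>
    cases j with
    | inl j =>
      rw [Matrix.fromBlocks_apply₂₁]
      rw [show Msp * C * ((2:ℤ) • (1 : Matrix (Fin n) (Fin n) ℤ)) = (2:ℤ) • (Msp * C) by
        rw [Matrix.mul_smul, Matrix.mul_one]]
      exact ⟨(Msp * C) a0 j, by simp [two_mul]⟩
    | inr b =>
      rw [Matrix.fromBlocks_apply₂₂]
      rw [Int.even_iff]
      fin_cases a0 <;> fin_cases b <;>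
        simp [Msp, Matrix.mul_apply, Matrix.vecMul, dotProduct,
          Fin.sum_univ_two] <;> omega
end E1

section E2
variable {n : ℕ}

theorem even_SQT (GB : Matrix (Fin n) (Fin n) ℤ) (heven : EvenGram GB)
    (Q : Matrix (Fin n ⊕ Fin 2) (Fin n ⊕ Fin 2) ℤ)
    (hQ : Qᵀ * (Matrix.fromBlocks GB 0 0 (gramI 1 1)) * Q
        = Matrix.fromBlocks GB 0 0 (gramI 1 1)) :
    ∀ i j, Even (((Matrix.fromBlocks ((2:ℤ) • (1 : Matrix (Fin n) (Fin n) ℤ)) 0 0 Msp) * Q *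
      (Matrix.fromBlocks (1 : Matrix (Fin n) (Fin n) ℤ) 0 0 Msp)) i j) := by
  set H : Matrix (Fin n ⊕ Fin 2) (Fin n ⊕ Fin 2) ℤ :=
    Matrix.fromBlocks GB 0 0 (gramI 1 1) with hHdef
  have hJ : ∀ z : Fin 2 → ℤ, z ⬝ᵥ ((gramI 1 1) *ᵥ z) = z 0 * z 0 - z 1 * z 1 := by
    intro z
    simp [gramI, dotProduct, Matrix.mulVec_diagonal, Fin.sum_univ_two]
    ring
  have hn : ∀ v : Fin n ⊕ Fin 2 → ℤ,
      (Q *ᵥ v) ⬝ᵥ (H *ᵥ (Q *ᵥ v)) = v ⬝ᵥ (H *ᵥ v) := quad_eq H Q hQ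
  have hsplit : ∀ c : Fin n ⊕ Fin 2 → ℤ, c ⬝ᵥ (H *ᵥ c) =
      (fun i => c (Sum.inl i)) ⬝ᵥ (GB *ᵥ (fun i => c (Sum.inl i)))
      + (fun b => c (Sum.inr b)) ⬝ᵥ ((gramI 1 1) *ᵥ (fun b => c (Sum.inr b))) := by
    intro c
    have hc : c = Sum.elim (fun i => c (Sum.inl i)) (fun b => c (Sum.inr b)) := by
      funext x; cases x <;> rfl
    nth_rewrite 1 [hc]
    nth_rewrite 1 [hc]
    rw [hHdef, Matrix.fromBlocks_mulVec]
    simp [dotProduct, Fintype.sum_sum_type]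
    rfl
  have par1 : ∀ x y : ℤ, Even (x * x - y * y) → Even (x + y) := by
    intro x y h
    rw [Int.even_sub, Int.even_mul, or_self, Int.even_mul, or_self] at h
    rw [Int.even_add]; exact h
  have par2 : ∀ x y : ℤ, Odd (x * x - y * y) → Odd (x + y) := by
    intro x y h
    rw [← Int.not_even_iff_odd] at h ⊢
    intro hc
    apply h
    rw [Int.even_sub, Int.even_mul, or_self, Int.even_mul, or_self]
    rw [Int.even_add] at hc
    exact hc
  -- condition on the lower-left block
  have cond1 : ∀ j : Fin n, Even (Q (Sum.inr 0) (Sum.inl j) + Q (Sum.inr 1) (Sum.inl j)) := by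
    intro j
    set v : Fin n ⊕ Fin 2 → ℤ := Sum.elim (Pi.single j 1) 0 with hvdef
    set c : Fin n ⊕ Fin 2 → ℤ := Q *ᵥ v with hcdef
    have hcval : ∀ a1 : Fin 2, c (Sum.inr a1) = Q (Sum.inr a1) (Sum.inl j) := by
      intro a1
      rw [hcdef, hvdef]
      simp [Matrix.mulVec, dotProduct, Fintype.sum_sum_type, Pi.single_apply,
        mul_ite, Finset.sum_ite_eq']
    have hrhs : Even (v ⬝ᵥ (H *ᵥ v)) := by
      rw [hsplit v]
      have h1 : (fun i => v (Sum.inl i)) = Pi.single j (1:ℤ) := by funext i; rfl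
      have h2 : (fun b => v (Sum.inr b)) = (0 : Fin 2 → ℤ) := by funext b; rfl
      rw [h1, h2]
      simp only [Matrix.mulVec_zero, dotProduct_zero, add_zero]
      exact heven _
    have hlhs := hn v
    rw [hsplit (Q *ᵥ v)] at hlhs
    have heL : Even ((fun i => (Q *ᵥ v) (Sum.inl i)) ⬝ᵥ (GB *ᵥ (fun i => (Q *ᵥ v) (Sum.inl i)))) :=
      heven _
    have hyy := hJ (fun b => (Q *ᵥ v) (Sum.inr b))
    rw [hyy] at hlhs
    have hquad : Even ((Q *ᵥ v) (Sum.inr 0) * (Q *ᵥ v) (Sum.inr 0)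
        - (Q *ᵥ v) (Sum.inr 1) * (Q *ᵥ v) (Sum.inr 1)) := by
      obtain ⟨r1, hr1⟩ := heL
      obtain ⟨r2, hr2⟩ := hrhs
      refine ⟨r2 - r1, ?_⟩
      rw [← hlhs] at hr2
      linarith
    have := par1 _ _ hquad
    rw [hcdef] at hcval
    rw [← hcval 0, ← hcval 1] at *
    exact this
  -- condition on the lower-right block
  have cond2 : ∀ b : Fin 2, Odd (Q (Sum.inr 0) (Sum.inr b) + Q (Sum.inr 1) (Sum.inr b)) := by
    intro b
    set v : Fin n ⊕ Fin 2 → ℤ := Sum.elim 0 (Pi.single b 1) with hvdef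
    have hcval : ∀ a1 : Fin 2, (Q *ᵥ v) (Sum.inr a1) = Q (Sum.inr a1) (Sum.inr b) := by
      intro a1
      rw [hvdef]
      simp [Matrix.mulVec, dotProduct, Fintype.sum_sum_type, Pi.single_apply,
        mul_ite, Finset.sum_ite_eq']
    have hrhs : Odd (v ⬝ᵥ (H *ᵥ v)) := by
      rw [hsplit v]
      have h1 : (fun i => v (Sum.inl i)) = (0 : Fin n → ℤ) := by funext i; rfl
      have h2 : (fun b' => v (Sum.inr b')) = Pi.single b (1:ℤ) := by funext b'; rfl
      rw [h1, h2, hJ]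
      simp only [Matrix.mulVec_zero, dotProduct_zero, zero_add]
      fin_cases b <;> simp [Pi.single_apply] <;> decide
    have hlhs := hn v
    rw [hsplit (Q *ᵥ v)] at hlhs
    have heL : Even ((fun i => (Q *ᵥ v) (Sum.inl i)) ⬝ᵥ (GB *ᵥ (fun i => (Q *ᵥ v) (Sum.inl i)))) :=
      heven _
    have hyy := hJ (fun b' => (Q *ᵥ v) (Sum.inr b'))
    rw [hyy] at hlhs
    have hquad : Odd ((Q *ᵥ v) (Sum.inr 0) * (Q *ᵥ v) (Sum.inr 0)
        - (Q *ᵥ v) (Sum.inr 1) * (Q *ᵥ v) (Sum.inr 1)) := by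
      obtain ⟨r1, hr1⟩ := heL
      obtain ⟨r2, hr2⟩ := hrhs
      refine ⟨r2 - r1, ?_⟩
      rw [← hlhs] at hr2
      linarith
    have := par2 _ _ hquad
    rw [← hcval 0, ← hcval 1] at *
    exact this
  -- block decomposition
  have hQblocks : Q = Matrix.fromBlocks Q.toBlocks₁₁ Q.toBlocks₁₂ Q.toBlocks₂₁ Q.toBlocks₂₂ :=
    (Matrix.fromBlocks_toBlocks Q).symm
  set A := Q.toBlocks₁₁
  set B := Q.toBlocks₁₂
  set C := Q.toBlocks₂₁
  set D := Q.toBlocks₂₂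
  have hprod : (Matrix.fromBlocks ((2:ℤ) • (1 : Matrix (Fin n) (Fin n) ℤ)) 0 0 Msp) * Q *
      (Matrix.fromBlocks (1 : Matrix (Fin n) (Fin n) ℤ) 0 0 Msp)
      = Matrix.fromBlocks (((2:ℤ) • (1 : Matrix (Fin n) (Fin n) ℤ)) * A)
        (((2:ℤ) • (1 : Matrix (Fin n) (Fin n) ℤ)) * B * Msp) (Msp * C) (Msp * D * Msp) := by
    rw [hQblocks]
    rw [Matrix.fromBlocks_multiply, Matrix.fromBlocks_multiply]
    congr 1 <;> simp
  intro i j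
  rw [hprod]
  obtain ⟨t1, ht1⟩ := cond2 0
  obtain ⟨t2, ht2⟩ := cond2 1
  have hd0 : D 0 0 + D 1 0 = 2 * t1 + 1 := ht1
  have hd1 : D 0 1 + D 1 1 = 2 * t2 + 1 := ht2
  cases i with
  | inl i =>
    cases j with
    | inl j =>
      rw [Matrix.fromBlocks_apply₁₁]
      rw [show ((2:ℤ) • (1 : Matrix (Fin n) (Fin n) ℤ)) * A = (2:ℤ) • A by
        rw [Matrix.smul_mul, Matrix.one_mul]]
      exact ⟨A i j, by simp [two_mul]⟩
    | inr b =>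
      rw [Matrix.fromBlocks_apply₁₂]
      rw [show ((2:ℤ) • (1 : Matrix (Fin n) (Fin n) ℤ)) * B * Msp = (2:ℤ) • (B * Msp) by
        rw [Matrix.smul_mul, Matrix.one_mul, Matrix.smul_mul]]
      exact ⟨(B * Msp) i b, by simp [two_mul]⟩
  | inr a0 =>
    cases j with
    | inl j =>
      rw [Matrix.fromBlocks_apply₂₁]
      obtain ⟨r, hr⟩ := cond1 j
      have hC0 : C 0 j = Q (Sum.inr 0) (Sum.inl j) := rfl
      have hC1 : C 1 j = Q (Sum.inr 1) (Sum.inl j) := rfl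
      rw [Int.even_iff]
      fin_cases a0 <;>
        simp [Msp, Matrix.mul_apply, Matrix.vecMul, dotProduct, Fin.sum_univ_two,
          hC0, hC1] <;> omega
    | inr b =>
      rw [Matrix.fromBlocks_apply₂₂]
      rw [Int.even_iff]
      fin_cases a0 <;> fin_cases b <;>
        simp [Msp, Matrix.mul_apply, Matrix.vecMul, dotProduct, Fin.sum_univ_two] <;>
          omega
end E2

section assemble
variable {n : ℕ}

theorem gramII_mul_gramII : gramII * gramII = 1 := by
  ext i j
  fin_cases i <;> fin_cases j <;>
    simp [gramII, Matrix.mul_apply, Fin.sum_univ_two]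

theorem gramII_transpose : gramIIᵀ = gramII := by
  ext i j
  fin_cases i <;> fin_cases j <;> simp [gramII]

theorem fromBlocks_two_one :
    (Matrix.fromBlocks ((2:ℤ) • (1 : Matrix (Fin n) (Fin n) ℤ)) 0 0
      ((2:ℤ) • (1 : Matrix (Fin 2) (Fin 2) ℤ)))
      = (2:ℤ) • (1 : Matrix (Fin n ⊕ Fin 2) (Fin n ⊕ Fin 2) ℤ) := by
  rw [← Matrix.fromBlocks_one (l := Fin n) (m := Fin 2), Matrix.fromBlocks_smul]
  congr 1 <;> simp

theorem Msp_gramI_Msp : Mspᵀ * (gramI 1 1) * Msp = (2:ℤ) • gramII := by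
  ext i j
  fin_cases i <;> fin_cases j <;>
    simp [Msp, gramI, gramII, Matrix.mul_apply, Matrix.diagonal, Fin.sum_univ_two] <;>
      decide

theorem Msp_gramII_Msp : Mspᵀ * ((2:ℤ) • gramII) * Msp = (4:ℤ) • (gramI 1 1) := by
  ext i j
  fin_cases i <;> fin_cases j <;>
    simp [Msp, gramI, gramII, Matrix.mul_apply, Matrix.diagonal, Fin.sum_univ_two] <;>
      decide
end assemble

theorem fromBlocks_congr {l m o p : Type*} {α : Type*}
    {A A' : Matrix l m α} {B B' : Matrix l p α} {C C' : Matrix o m α} {D D' : Matrix o p α}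
    (hA : A = A') (hB : B = B') (hC : C = C') (hD : D = D') :
    Matrix.fromBlocks A B C D = Matrix.fromBlocks A' B' C' D' := by
  rw [hA, hB, hC, hD]

/-- For every even unimodular lattice `B` (symmetric Gram matrix `GB`),
the automorphism group `Aut(B(2) ⊕ II_{1,1})` is isomorphic as a group
to `Aut(B ⊕ I_{1,1})`. -/
theorem period_lattice_stmt1 {n : ℕ} (GB : Matrix (Fin n) (Fin n) ℤ)
    (hsymm : GB.IsSymm) (heven : EvenGram GB) (hunim : IsUnit GB.det) :
    Nonempty (gramAut (gramSum ((2 : ℤ) • GB) gramII) ≃* gramAut (gramSum GB (gramI 1 1))) := by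
  classical
  have hGBsymm : GBᵀ = GB := hsymm
  have hGBK : GB * GB⁻¹ = 1 := Matrix.mul_nonsing_inv GB hunim
  have hKGB : GB⁻¹ * GB = 1 := Matrix.nonsing_inv_mul GB hunim
  have hKsymm : (GB⁻¹)ᵀ = GB⁻¹ := by rw [Matrix.transpose_nonsing_inv, hGBsymm]
  set G1 : Matrix (Fin n ⊕ Fin 2) (Fin n ⊕ Fin 2) ℤ :=
    Matrix.fromBlocks ((2:ℤ) • GB) 0 0 gramII with hG1
  set G2 : Matrix (Fin n ⊕ Fin 2) (Fin n ⊕ Fin 2) ℤ :=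
    Matrix.fromBlocks GB⁻¹ 0 0 ((2:ℤ) • gramII) with hG2
  set G3 : Matrix (Fin n ⊕ Fin 2) (Fin n ⊕ Fin 2) ℤ :=
    Matrix.fromBlocks GB 0 0 ((2:ℤ) • gramII) with hG3
  set G4 : Matrix (Fin n ⊕ Fin 2) (Fin n ⊕ Fin 2) ℤ :=
    Matrix.fromBlocks GB 0 0 (gramI 1 1) with hG4
  have hGH : G1 * G2 = (2:ℤ) • 1 := by
    rw [hG1, hG2, ← fromBlocks_two_one, Matrix.fromBlocks_multiply]
    refine fromBlocks_congr ?_ ?_ ?_ ?_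
    · rw [Matrix.smul_mul, hGBK]; simp
    · simp
    · simp
    · rw [Matrix.mul_smul, gramII_mul_gramII]; simp
  have hHG : G2 * G1 = (2:ℤ) • 1 := by
    rw [hG1, hG2, ← fromBlocks_two_one, Matrix.fromBlocks_multiply]
    refine fromBlocks_congr ?_ ?_ ?_ ?_
    · rw [Matrix.mul_smul, hKGB]; simp
    · simp
    · simp
    · rw [Matrix.smul_mul, gramII_mul_gramII]; simp
  have hG1symm : G1ᵀ = G1 := by
    rw [hG1, Matrix.fromBlocks_transpose]
    refine fromBlocks_congr ?_ ?_ ?_ ?_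
    · rw [Matrix.transpose_smul, hGBsymm]
    · simp
    · simp
    · exact gramII_transpose
  have hG2symm : G2ᵀ = G2 := by
    rw [hG2, Matrix.fromBlocks_transpose]
    refine fromBlocks_congr ?_ ?_ ?_ ?_
    · exact hKsymm
    · simp
    · simp
    · rw [Matrix.transpose_smul, gramII_transpose]
  have hWW' : (Matrix.fromBlocks GB 0 0 (1 : Matrix (Fin 2) (Fin 2) ℤ)) *
      (Matrix.fromBlocks GB⁻¹ 0 0 (1 : Matrix (Fin 2) (Fin 2) ℤ)) = 1 := by
    rw [← Matrix.fromBlocks_one (l := Fin n) (m := Fin 2), Matrix.fromBlocks_multiply]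
    refine fromBlocks_congr ?_ ?_ ?_ ?_ <;> simp [hGBK]
  have hW'W : (Matrix.fromBlocks GB⁻¹ 0 0 (1 : Matrix (Fin 2) (Fin 2) ℤ)) *
      (Matrix.fromBlocks GB 0 0 (1 : Matrix (Fin 2) (Fin 2) ℤ)) = 1 := by
    rw [← Matrix.fromBlocks_one (l := Fin n) (m := Fin 2), Matrix.fromBlocks_multiply]
    refine fromBlocks_congr ?_ ?_ ?_ ?_ <;> simp [hKGB]
  have hW : (Matrix.fromBlocks GB 0 0 (1 : Matrix (Fin 2) (Fin 2) ℤ))ᵀ * G2 *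
      (Matrix.fromBlocks GB 0 0 (1 : Matrix (Fin 2) (Fin 2) ℤ)) = G3 := by
    rw [hG2, hG3, Matrix.fromBlocks_transpose, Matrix.fromBlocks_multiply,
      Matrix.fromBlocks_multiply]
    refine fromBlocks_congr ?_ ?_ ?_ ?_ <;>
      simp [hGBsymm, hGBK, hKGB]
  have hTS : (Matrix.fromBlocks (1 : Matrix (Fin n) (Fin n) ℤ) 0 0 Msp) *
      (Matrix.fromBlocks ((2:ℤ) • (1 : Matrix (Fin n) (Fin n) ℤ)) 0 0 Msp) = (2:ℤ) • 1 := by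
    rw [← fromBlocks_two_one, Matrix.fromBlocks_multiply]
    refine fromBlocks_congr ?_ ?_ ?_ ?_ <;> simp [Msp_mul_Msp]
  have hST : (Matrix.fromBlocks ((2:ℤ) • (1 : Matrix (Fin n) (Fin n) ℤ)) 0 0 Msp) *
      (Matrix.fromBlocks (1 : Matrix (Fin n) (Fin n) ℤ) 0 0 Msp) = (2:ℤ) • 1 := by
    rw [← fromBlocks_two_one, Matrix.fromBlocks_multiply]
    refine fromBlocks_congr ?_ ?_ ?_ ?_ <;> simp [Msp_mul_Msp]
  have hT : (Matrix.fromBlocks (1 : Matrix (Fin n) (Fin n) ℤ) 0 0 Msp)ᵀ * G4 *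
      (Matrix.fromBlocks (1 : Matrix (Fin n) (Fin n) ℤ) 0 0 Msp) = G3 := by
    rw [hG4, hG3, Matrix.fromBlocks_transpose, Matrix.fromBlocks_multiply,
      Matrix.fromBlocks_multiply]
    refine fromBlocks_congr ?_ ?_ ?_ ?_ <;> simp [Msp_gramI_Msp]
  have hS : (Matrix.fromBlocks ((2:ℤ) • (1 : Matrix (Fin n) (Fin n) ℤ)) 0 0 Msp)ᵀ * G3 *
      (Matrix.fromBlocks ((2:ℤ) • (1 : Matrix (Fin n) (Fin n) ℤ)) 0 0 Msp) = (4:ℤ) • G4 := by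
    rw [hG3, hG4]
    have h4 : (4:ℤ) • Matrix.fromBlocks GB (0 : Matrix (Fin n) (Fin 2) ℤ)
        (0 : Matrix (Fin 2) (Fin n) ℤ) (gramI 1 1)
        = Matrix.fromBlocks ((4:ℤ) • GB) 0 0 ((4:ℤ) • gramI 1 1) := by
      rw [Matrix.fromBlocks_smul]
      refine fromBlocks_congr rfl ?_ ?_ rfl <;> simp
    rw [h4, Matrix.fromBlocks_transpose, Matrix.fromBlocks_multiply,
      Matrix.fromBlocks_multiply]
    refine fromBlocks_congr ?_ ?_ ?_ ?_
    · rw [Matrix.transpose_smul, Matrix.transpose_one]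
      simp only [Matrix.zero_mul, Matrix.mul_zero, add_zero, zero_add, Matrix.smul_mul,
        Matrix.mul_smul, Matrix.one_mul, Matrix.mul_one, smul_smul]
      norm_num
    · simp
    · simp
    · simp only [Matrix.zero_mul, Matrix.mul_zero, add_zero, zero_add]
      exact Msp_gramII_Msp
  have e1 : autSub G1 ≃* autSub (gramSum ((2:ℤ) • GB) gramII) :=
    autSubCongr finSumFinEquiv G1
  have e2 : autSub G1 ≃* autSub G2 := autSubDual G1 G2 hG1symm hG2symm hGH hHG
  have e3 : autSub G2 ≃* autSub G3 :=
    autSubConj G2 G3 (Matrix.fromBlocks GB 0 0 1) (Matrix.fromBlocks GB⁻¹ 0 0 1) hWW' hW'W hW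
  have e4 : autSub G3 ≃* autSub G4 :=
    autSubHalf G3 G4 (Matrix.fromBlocks 1 0 0 Msp) (Matrix.fromBlocks ((2:ℤ) • 1) 0 0 Msp)
      hTS hST hT hS
      (fun P P' h1 h2 hP => even_TPS GB heven hunim P P' h1 h2 (by rw [← hG3]; exact hP))
      (fun Q Q' _ _ hQ => even_SQT GB heven Q (by rw [← hG4]; exact hQ))
  have e5 : autSub G4 ≃* autSub (gramSum GB (gramI 1 1)) :=
    autSubCongr finSumFinEquiv G4
  have g1 : gramAut (gramSum ((2:ℤ) • GB) gramII) = autSub (gramSum ((2:ℤ) • GB) gramII) :=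
    SetLike.ext fun x => Iff.rfl
  have g2 : autSub (gramSum GB (gramI 1 1)) = gramAut (gramSum GB (gramI 1 1)) :=
    SetLike.ext fun x => Iff.rfl
  exact ⟨(((((MulEquiv.subgroupCongr g1).trans e1.symm).trans e2).trans e3).trans e4).trans
    (e5.trans (MulEquiv.subgroupCongr g2))⟩
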